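/- Let E be a countable set, h > 0, and a ∈ ℓ²(E, ℂ). Then for all n < m, ‖exp(ℓ_{a,F_n}) − exp(ℓ_{a,F_m})‖²_{L²(μ_{E,h}^K)} ≤ 3h · exp(h Σ_{j∈E} (Re a_j)²) · Σ_{j∈F_m∖F_n} |a_j|². (Quantitative Cauchy estimate in the proof of Theorem 2.6.) -/

import Mathlib

open MeasureTheory ProbabilityTheory Filter
open scoped NNReal ENNReal

/-- `ℓ_{a,S}(x) = ∑ j ∈ S, a_j x_j`. -/
noncomputable def ellSum {E : Type*} (a : E → ℂ) (S : Finset E) (x : E → ℝ) : ℂ :=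
  ∑ j ∈ S, a j * (x j : ℂ)

section Auxiliary

open Complex
open scoped Real

lemma gauss_pt {v : ℝ≥0} (hv : v ≠ 0) (b : ℂ) (x : ℝ) :
    ((gaussianPDFReal 0 v x : ℝ) : ℂ) * Complex.exp (b * x) =
      ((Real.sqrt (2 * π * v))⁻¹ : ℝ) *
        Complex.exp ((-(1/(2*(v:ℝ))) : ℂ) * x^2 + b * x + 0) := by
  have hv0 : (0:ℝ) < v := lt_of_le_of_ne v.coe_nonneg (by exact_mod_cast hv.symm)
  have hvc : ((v:ℝ):ℂ) ≠ 0 := by exact_mod_cast hv0.ne'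
  rw [gaussianPDFReal]
  push_cast
  rw [mul_assoc, ← Complex.exp_add]
  congr 2
  field_simp
  ring

lemma gaussianReal_eq_withDensity {v : ℝ≥0} (hv : v ≠ 0) :
    gaussianReal 0 v =
      (volume : Measure ℝ).withDensity
        (fun x => ((gaussianPDFReal 0 v x).toNNReal : ℝ≥0∞)) := by
  rw [gaussianReal_of_var_ne_zero 0 hv]
  congr 1

lemma meas_pdf {v : ℝ≥0} : Measurable (fun x => (gaussianPDFReal 0 v x).toNNReal) :=
  (measurable_gaussianPDFReal 0 v).real_toNNReal

lemma pdf_smul_eq {v : ℝ≥0} (hv : v ≠ 0) (b : ℂ) :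
    (fun x : ℝ => (gaussianPDFReal 0 v x).toNNReal • Complex.exp (b * x)) =
      fun x : ℝ => (((Real.sqrt (2 * π * v))⁻¹ : ℝ) : ℂ) *
        Complex.exp ((-(1/(2*(v:ℝ))) : ℂ) * x^2 + b * x + 0) := by
  ext x
  rw [NNReal.smul_def, Real.coe_toNNReal _ (gaussianPDFReal_nonneg 0 v x),
    Complex.real_smul]
  exact gauss_pt hv b x

lemma gauss_cexp_integrable {v : ℝ≥0} (hv : v ≠ 0) (b : ℂ) :
    Integrable (fun x : ℝ => Complex.exp (b * x)) (gaussianReal 0 v) := by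
  have hv0 : (0:ℝ) < v := lt_of_le_of_ne v.coe_nonneg (by exact_mod_cast hv.symm)
  rw [gaussianReal_eq_withDensity hv]
  refine (integrable_withDensity_iff_integrable_smul meas_pdf).mpr ?_
  rw [pdf_smul_eq hv b]
  apply Integrable.const_mul
  exact integrable_cexp_quadratic (by simp; positivity) b 0

lemma gauss_cexp_integral {v : ℝ≥0} (hv : v ≠ 0) (b : ℂ) :
    ∫ x : ℝ, Complex.exp (b * x) ∂(gaussianReal 0 v) = Complex.exp (b^2 * v / 2) := by
  have hv0 : (0:ℝ) < v := lt_of_le_of_ne v.coe_nonneg (by exact_mod_cast hv.symm)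
  have hvc : ((v:ℝ):ℂ) ≠ 0 := by exact_mod_cast hv0.ne'
  rw [gaussianReal_eq_withDensity hv, integral_withDensity_eq_integral_smul meas_pdf,
    pdf_smul_eq hv b, integral_const_mul, integral_cexp_quadratic (by simp; positivity) b 0]
  have h2 : ((π : ℂ) / -(-(1/(2*(v:ℝ))) : ℂ)) = (((2 * π * v : ℝ)) : ℂ) := by
    push_cast
    field_simp
  rw [h2]
  have h3 : (((2 * π * v : ℝ)) : ℂ) ^ (1/2 : ℂ) = ((Real.sqrt (2 * π * v) : ℝ) : ℂ) := by
    rw [show (1/2:ℂ) = ((1/2:ℝ):ℂ) by norm_num, ← Complex.ofReal_cpow (by positivity),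
      ← Real.sqrt_eq_rpow]
  rw [h3, ← mul_assoc, ← Complex.ofReal_mul,
    inv_mul_cancel₀ (by positivity : Real.sqrt (2 * π * v) ≠ 0)]
  rw [Complex.ofReal_one, one_mul]
  congr 1
  field_simp
  ring

lemma pi_cexp_integral {ι : Type*} [Fintype ι] {v : ℝ≥0} (hv : v ≠ 0) (c : ι → ℂ) :
    ∫ y : ι → ℝ, Complex.exp (∑ i, c i * y i) ∂(Measure.pi fun _ => gaussianReal 0 v) =
      ∏ i, Complex.exp ((c i)^2 * v / 2) := by
  letI : MeasureSpace ℝ := ⟨gaussianReal 0 v⟩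
  haveI : SigmaFinite (volume : Measure ℝ) := by
    change SigmaFinite (gaussianReal 0 v); infer_instance
  have h1 : (Measure.pi fun _ : ι => gaussianReal 0 v) = (volume : Measure (ι → ℝ)) := rfl
  simp_rw [Complex.exp_sum, h1]
  rw [← h1, MeasureTheory.integral_fintype_prod_eq_prod (ι := ι) (fun i (x : ℝ) => Complex.exp (c i * x))]
  exact Finset.prod_congr rfl fun i _ => gauss_cexp_integral hv (c i)

lemma pi_cexp_integrable {ι : Type*} [Fintype ι] {v : ℝ≥0} (hv : v ≠ 0) (c : ι → ℂ) :
    Integrable (fun y : ι → ℝ => Complex.exp (∑ i, c i * y i))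
      (Measure.pi fun _ => gaussianReal 0 v) := by
  letI : MeasureSpace ℝ := ⟨gaussianReal 0 v⟩
  haveI : SigmaFinite (volume : Measure ℝ) := by
    change SigmaFinite (gaussianReal 0 v); infer_instance
  have h1 : (Measure.pi fun _ : ι => gaussianReal 0 v) = (volume : Measure (ι → ℝ)) := rfl
  simp_rw [Complex.exp_sum, h1]
  exact Integrable.fintype_prod (f := fun i (x : ℝ) => Complex.exp (c i * x))
    fun i => gauss_cexp_integrable hv (c i)

section mu
variable {E : Type*} {h : ℝ} (hh : 0 < h) {μ : Measure (E → ℝ)}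
  (hμ : ∀ S : Finset E,
      μ.map (fun x (i : S) => x i) =
        Measure.pi fun _ : S => gaussianReal 0 (h / 2).toNNReal)

lemma hv_ne {h : ℝ} (hh : 0 < h) : (h / 2).toNNReal ≠ 0 := by
  simp only [ne_eq, Real.toNNReal_eq_zero, not_le]
  positivity

lemma comp_eq (S : Finset E) (c : E → ℂ) :
    (fun x : E → ℝ => Complex.exp (∑ j ∈ S, c j * x j)) =
      (fun y : S → ℝ => Complex.exp (∑ i : S, c i * y i)) ∘ (fun x (i : S) => x i) := by
  ext x
  simp only [Function.comp_apply]
  rw [← Finset.sum_coe_sort S (fun j => c j * (x j : ℂ))]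

lemma meas_restrict (S : Finset E) : Measurable (fun x : E → ℝ => fun i : S => x i) :=
  measurable_pi_lambda _ fun i => measurable_pi_apply _

lemma cexp_sum_aesm (S : Finset E) (c : E → ℂ) (ν : Measure (S → ℝ)) :
    AEStronglyMeasurable (fun y : S → ℝ => Complex.exp (∑ i : S, c i * y i)) ν := by
  refine Continuous.aestronglyMeasurable ?_
  fun_prop

include hh hμ in
lemma mu_cexp_integral (S : Finset E) (c : E → ℂ) :
    ∫ x, Complex.exp (∑ j ∈ S, c j * x j) ∂μ =
      ∏ j ∈ S, Complex.exp ((c j)^2 * (h/4)) := by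
  have step1 : ∫ x, Complex.exp (∑ j ∈ S, c j * x j) ∂μ =
      ∫ x, (fun y : S → ℝ => Complex.exp (∑ i : S, c i * y i)) (fun i : S => x i) ∂μ := by
    congr 1
    ext x
    simp only
    rw [← Finset.sum_coe_sort S (fun j => c j * (x j : ℂ))]
  rw [step1, ← integral_map (meas_restrict S).aemeasurable (cexp_sum_aesm S c _),
    hμ S, pi_cexp_integral (hv_ne hh) (fun i : S => c i)]
  rw [← Finset.prod_coe_sort S (fun j => Complex.exp ((c j)^2 * (h/4)))]
  refine Finset.prod_congr rfl fun i _ => ?_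
  congr 1
  rw [Real.coe_toNNReal _ (by positivity)]
  push_cast
  ring

include hh hμ in
lemma mu_cexp_integrable (S : Finset E) (c : E → ℂ) :
    Integrable (fun x => Complex.exp (∑ j ∈ S, c j * x j)) μ := by
  rw [comp_eq S c]
  refine (integrable_map_measure (cexp_sum_aesm S c _) (meas_restrict S).aemeasurable).mp ?_
  rw [hμ S]
  exact pi_cexp_integrable (hv_ne hh) _

end mu

lemma key_ineq {α β γ : ℝ} (hα : 0 ≤ α) (hβ : 0 ≤ β) (hγ : γ^2 ≤ α*β/4) :
    1 + Real.exp α - 2 * Real.exp ((α-β)/4) * Real.cos γ ≤ 3*(α+β)*Real.exp α := by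
  set f := Real.exp ((α-β)/4) with hf
  set A := Real.exp α with hA
  have hfpos : 0 < f := Real.exp_pos _
  have hApos : 0 < A := Real.exp_pos _
  have hA1 : 1 ≤ A := Real.one_le_exp hα
  have hcos : 1 - γ^2/2 ≤ Real.cos γ := Real.one_sub_sq_div_two_le_cos
  -- step 1
  have step1 : 1 + A - 2 * f * Real.cos γ ≤ (1 - f) + (A - f) + f * γ^2 := by
    nlinarith [hfpos]
  -- bound 1 - f ≤ β/4
  have hb1 : 1 - f ≤ β/4 := by
    have h0 := Real.add_one_le_exp ((α-β)/4)
    rw [← hf] at h0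
    linarith
  -- bound A - f ≤ A * (3α+β)/4
  have hb2 : A - f ≤ A * ((3*α+β)/4) := by
    have hid : f * Real.exp ((3*α+β)/4) = A := by
      rw [hf, hA, ← Real.exp_add]; ring_nf
    have hinv : Real.exp ((3*α+β)/4) * Real.exp (-((3*α+β)/4)) = 1 := by
      rw [← Real.exp_add]; simp
    have hexpneg : 1 - (3*α+β)/4 ≤ Real.exp (-((3*α+β)/4)) := by
      have := Real.add_one_le_exp (-((3*α+β)/4)); linarith
    nlinarith [Real.exp_pos ((3*α+β)/4), Real.exp_pos (-((3*α+β)/4))]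
  -- bound f γ² ≤ (1/3)(α+β) A
  have hb3 : f * γ^2 ≤ (1/3) * (α+β) * A := by
    have hfq : f ≤ Real.exp (α/4) := Real.exp_le_exp.mpr (by linarith)
    have hqr : Real.exp (α/4) * Real.exp (3*α/4) = A := by
      rw [hA, ← Real.exp_add]; ring_nf
    have hr : 3*α/4 + 1 ≤ Real.exp (3*α/4) := Real.add_one_le_exp _
    have e1 : f * γ^2 ≤ Real.exp (α/4) * (α*β/4) :=
      mul_le_mul hfq hγ (sq_nonneg γ) (Real.exp_pos _).le
    have hab : 0 ≤ α + β := by linarith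
    have e3 : α/4 ≤ (1/3) * Real.exp (3*α/4) := by linarith
    have e4 : Real.exp (α/4) * (α*β/4) ≤ Real.exp (α/4) * ((α+β)*(α/4)) :=
      mul_le_mul_of_nonneg_left (by nlinarith [sq_nonneg α]) (Real.exp_pos _).le
    have e5 : Real.exp (α/4) * ((α+β)*(α/4)) ≤
        Real.exp (α/4) * ((α+β)*((1/3)*Real.exp (3*α/4))) :=
      mul_le_mul_of_nonneg_left (mul_le_mul_of_nonneg_left e3 hab) (Real.exp_pos _).le
    have e6 : Real.exp (α/4) * ((α+β)*((1/3)*Real.exp (3*α/4))) = (1/3)*(α+β)*A := by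
      rw [← hqr]; ring
    linarith
  have hfinal : (1 - f) + (A - f) + f * γ^2 ≤ 3*(α+β)*A := by
    have h1 : β/4 ≤ (α+β)*A/4 := by nlinarith
    have h2 : A * ((3*α+β)/4) ≤ 3*(α+β)*A/4 := by nlinarith
    linarith
  linarith

lemma norm_sub_sq_complex (z w : ℂ) :
    ‖z - w‖^2 = ((starRingEnd ℂ) z * z).re - 2 * ((starRingEnd ℂ) z * w).re
      + ((starRingEnd ℂ) w * w).re := by
  have h0 : ‖z - w‖^2 = Complex.normSq (z - w) := by
    rw [Complex.sq_norm]
  rw [h0]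
  simp only [Complex.normSq_apply, Complex.sub_re,
    Complex.sub_im, Complex.mul_re, Complex.conj_re, Complex.conj_im]
  ring

lemma conj_ellSum {E : Type*} (a : E → ℂ) (S : Finset E) (x : E → ℝ) :
    (starRingEnd ℂ) (ellSum a S x) = ∑ j ∈ S, (starRingEnd ℂ) (a j) * (x j : ℂ) := by
  rw [ellSum, map_sum]
  refine Finset.sum_congr rfl fun j _ => ?_
  rw [map_mul, Complex.conj_ofReal]

lemma pointwise_identity {E : Type*} [DecidableEq E] (a : E → ℂ) (Fn Fm : Finset E)
    (hsub : Fn ⊆ Fm) (x : E → ℝ) :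
    ‖Complex.exp (ellSum a Fn x) - Complex.exp (ellSum a Fm x)‖^2 =
      (Complex.exp (∑ j ∈ Fn, (a j + (starRingEnd ℂ) (a j)) * x j)).re
      - 2 * (Complex.exp (∑ j ∈ Fm,
          (a j + (if j ∈ Fn then (starRingEnd ℂ) (a j) else 0)) * x j)).re
      + (Complex.exp (∑ j ∈ Fm, (a j + (starRingEnd ℂ) (a j)) * x j)).re := by
  rw [norm_sub_sq_complex]
  have hconj : ∀ S : Finset E, (starRingEnd ℂ) (Complex.exp (ellSum a S x)) =
      Complex.exp (∑ j ∈ S, (starRingEnd ℂ) (a j) * (x j : ℂ)) := fun S => by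
    rw [← Complex.exp_conj, conj_ellSum]
  congr 1
  · congr 1
    · rw [hconj, ← Complex.exp_add, ellSum, ← Finset.sum_add_distrib]
      exact congrArg (fun z => (Complex.exp z).re) (Finset.sum_congr rfl fun j _ => by ring)
    · rw [hconj, ← Complex.exp_add, ellSum]
      congr 1
      have : ∑ j ∈ Fm, (a j + (if j ∈ Fn then (starRingEnd ℂ) (a j) else 0)) * (x j : ℂ)
          = ∑ j ∈ Fm, a j * x j +
            ∑ j ∈ Fm, (if j ∈ Fn then (starRingEnd ℂ) (a j) * x j else 0) := by
        rw [← Finset.sum_add_distrib]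
        refine Finset.sum_congr rfl fun j _ => ?_
        split <;> ring
      rw [this, Finset.sum_ite_mem, Finset.inter_eq_right.mpr hsub, add_comm]
  · rw [hconj, ← Complex.exp_add, ellSum, ← Finset.sum_add_distrib]
    exact congrArg (fun z => (Complex.exp z).re) (Finset.sum_congr rfl fun j _ => by ring)

end Auxiliary

/-- **Quantitative Cauchy estimate in the proof of Theorem 2.6.**  Let `E` be countable,
`h > 0`, `a ∈ ℓ²(E, ℂ)` and let `μ = μ_{E,h}^K` be the product over `E` of the Gaussian
measures `N(0, h/2)` (characterized by its finite-dimensional marginals).  If `(F_n)` is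
an increasing exhausting sequence of finite subsets of `E`, then for `n < m`,
`‖exp(ℓ_{a,F_n}) − exp(ℓ_{a,F_m})‖²_{L²(μ)}
  ≤ 3h · exp(h ∑_{j∈E} (Re a_j)²) · ∑_{j∈F_m∖F_n} |a_j|²`. -/
theorem exp_ell_a_cauchy_estimate
    (E : Type*) [Countable E] [DecidableEq E] (h : ℝ) (hh : 0 < h)
    (μ : Measure (E → ℝ)) [IsProbabilityMeasure μ]
    (hμ : ∀ S : Finset E,
      μ.map (fun x (i : S) => x i) =
        Measure.pi fun _ : S => gaussianReal 0 (h / 2).toNNReal)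
    (a : E → ℂ) (ha : Memℓp a 2)
    (F : ℕ → Finset E) (hFmono : Monotone F) (hFexh : ∀ j : E, ∃ n, j ∈ F n)
    (n m : ℕ) (hnm : n < m) :
    eLpNorm (fun x => Complex.exp (ellSum a (F n) x) -
        Complex.exp (ellSum a (F m) x)) 2 μ ^ 2 ≤
      ENNReal.ofReal (3 * h * Real.exp (h * ∑' j : E, (a j).re ^ 2) *
        ∑ j ∈ F m \ F n, ‖a j‖ ^ 2) := by
  have hsub : F n ⊆ F m := hFmono hnm.le
  set b : E → ℂ := fun j => a j + (starRingEnd ℂ) (a j) with hb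
  set d : E → ℂ := fun j => a j + (if j ∈ F n then (starRingEnd ℂ) (a j) else 0) with hd
  set f : (E → ℝ) → ℂ := fun x => Complex.exp (ellSum a (F n) x) -
      Complex.exp (ellSum a (F m) x) with hf
  -- the three complex integrals
  have hIb1 := mu_cexp_integrable hh hμ (F n) b
  have hId := mu_cexp_integrable hh hμ (F m) d
  have hIb2 := mu_cexp_integrable hh hμ (F m) b
  -- integrability of ‖f‖²
  have hInt : Integrable (fun x => ‖f x‖^2) μ := by
    refine (((hIb1.re.sub (hId.re.const_mul 2)).add hIb2.re).congr ?_)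
    exact ae_of_all _ fun x => (pointwise_identity a (F n) (F m) hsub x).symm
  -- abbreviations
  set rn : ℝ := ∑ j ∈ F n, (a j).re^2 with hrn
  set rm : ℝ := ∑ j ∈ F m, (a j).re^2 with hrm
  set t : ℝ := ∑ j ∈ F m \ F n, (a j).re^2 with ht
  set u : ℝ := ∑ j ∈ F m \ F n, (a j).im^2 with hu
  set w : ℝ := ∑ j ∈ F m \ F n, (a j).re * (a j).im with hw
  have hrm' : rm = rn + t := by
    rw [hrm, hrn, ht, ← Finset.sum_sdiff hsub, add_comm]
  -- value of the first and third integrals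
  have hbsq : ∀ j : E, (b j)^2 * ((h:ℂ)/4) = (((a j).re^2 * h : ℝ) : ℂ) := by
    intro j
    rw [hb]
    simp only [Complex.add_conj]
    push_cast
    ring
  have hTb : ∀ S : Finset E, ∫ x, Complex.exp (∑ j ∈ S, b j * x j) ∂μ =
      (((Real.exp (h * ∑ j ∈ S, (a j).re^2)) : ℝ) : ℂ) := by
    intro S
    rw [mu_cexp_integral hh hμ S b, ← Complex.exp_sum]
    rw [show (∑ j ∈ S, (b j)^2 * ((h:ℂ)/4)) = (((h * ∑ j ∈ S, (a j).re^2 : ℝ)) : ℂ) by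
      rw [Finset.sum_congr rfl fun j _ => hbsq j]
      push_cast [Finset.mul_sum]
      exact Finset.sum_congr rfl fun j _ => by ring]
    rw [Complex.ofReal_exp]
  -- value of the middle integral
  set s : ℂ := ∑ j ∈ F m \ F n, (a j)^2 with hs
  have hsre : s.re = t - u := by
    rw [hs, Complex.re_sum, ht, hu, ← Finset.sum_sub_distrib]
    refine Finset.sum_congr rfl fun j _ => ?_
    rw [sq, Complex.mul_re]
    ring
  have hsim : s.im = 2 * w := by
    rw [hs, Complex.im_sum, hw, Finset.mul_sum]
    refine Finset.sum_congr rfl fun j _ => ?_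
    rw [sq, Complex.mul_im]
    ring
  have hT2 : ∫ x, Complex.exp (∑ j ∈ F m, d j * x j) ∂μ =
      Complex.exp ((((h * rn : ℝ)) : ℂ) + (((h/4 : ℝ)) : ℂ) * s) := by
    rw [mu_cexp_integral hh hμ (F m) d, ← Complex.exp_sum]
    congr 1
    rw [← Finset.sum_sdiff hsub]
    have hpart1 : ∑ j ∈ F m \ F n, (d j)^2 * ((h:ℂ)/4) = (((h/4 : ℝ)) : ℂ) * s := by
      rw [hs, Finset.mul_sum]
      refine Finset.sum_congr rfl fun j hj => ?_
      have hj' : j ∉ F n := (Finset.mem_sdiff.mp hj).2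
      rw [hd]
      simp only [hj', if_false, add_zero]
      push_cast
      ring
    have hpart2 : ∑ j ∈ F n, (d j)^2 * ((h:ℂ)/4) = (((h * rn : ℝ)) : ℂ) := by
      have : ∀ j ∈ F n, (d j)^2 * ((h:ℂ)/4) = (((a j).re^2 * h : ℝ) : ℂ) := by
        intro j hj
        rw [hd]
        simp only [hj, if_true]
        rw [← hbsq j, hb]
      rw [Finset.sum_congr rfl this, hrn]
      push_cast [Finset.mul_sum]
      exact Finset.sum_congr rfl fun j _ => by ring
    rw [hpart1, hpart2]
    ring
  -- the integral of ‖f‖²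
  have hI : ∫ x, ‖f x‖^2 ∂μ =
      Real.exp (h * rn) - 2 * (Real.exp (h * rn + (h/4) * s.re) * Real.cos ((h/4) * s.im))
        + Real.exp (h * rm) := by
    have e0 : ∫ x, ‖f x‖^2 ∂μ = ∫ x, ((Complex.exp (∑ j ∈ F n, b j * x j)).re
        - 2 * (Complex.exp (∑ j ∈ F m, d j * x j)).re
        + (Complex.exp (∑ j ∈ F m, b j * x j)).re) ∂μ := by
      refine integral_congr_ae (ae_of_all _ fun x => ?_)
      exact pointwise_identity a (F n) (F m) hsub x
    rw [e0]
    simp only [← RCLike.re_to_complex]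
    have hIr1 : Integrable (fun x => RCLike.re (Complex.exp (∑ j ∈ F n, b j * (x j : ℂ)))) μ :=
      hIb1.re
    have hIr2 : Integrable
        (fun x => 2 * RCLike.re (Complex.exp (∑ j ∈ F m, d j * (x j : ℂ)))) μ :=
      hId.re.const_mul 2
    have hIr3 : Integrable (fun x => RCLike.re (Complex.exp (∑ j ∈ F m, b j * (x j : ℂ)))) μ :=
      hIb2.re
    have hIrs : Integrable (fun x => RCLike.re (Complex.exp (∑ j ∈ F n, b j * (x j : ℂ)))
        - 2 * RCLike.re (Complex.exp (∑ j ∈ F m, d j * (x j : ℂ)))) μ := hIr1.sub hIr2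
    rw [integral_add hIrs hIr3, integral_sub hIr1 hIr2, MeasureTheory.integral_const_mul,
      integral_re hIb1, integral_re hId, integral_re hIb2]
    simp only [RCLike.re_to_complex]
    rw [hTb (F n), hTb (F m), hT2]
    rw [Complex.exp_re]
    simp only [Complex.ofReal_re, Complex.add_re, Complex.add_im, Complex.ofReal_im,
      Complex.mul_re, Complex.mul_im, Complex.exp_ofReal_re]
    simp only [Real.exp_add]
    rw [hrn, hrm]
    ring
  -- summability of the squares of real parts
  have hsumm : Summable (fun j : E => (a j).re ^ 2) := by
    have ha2 : Summable (fun j : E => ‖a j‖ ^ (2 : ℝ)) := by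
      have := (memℓp_gen_iff (by norm_num : 0 < (2 : ℝ≥0∞).toReal)).mp ha
      simpa using this
    have ha2' : Summable (fun j : E => ‖a j‖ ^ (2 : ℕ)) := by
      refine ha2.congr fun j => ?_
      rw [← Real.rpow_natCast]
      norm_num
    refine ha2'.of_nonneg_of_le (fun j => sq_nonneg _) fun j => ?_
    have : (a j).re ^ 2 ≤ (a j).re ^ 2 + (a j).im ^ 2 := by nlinarith [sq_nonneg (a j).im]
    refine this.trans ?_
    rw [show ‖a j‖ ^ 2 = (a j).re ^ 2 + (a j).im ^ 2 by
      rw [Complex.sq_norm, Complex.normSq_apply]; ring]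
  set T : ℝ := ∑' j : E, (a j).re ^ 2 with hT
  have hrmT : rm ≤ T := Summable.sum_le_tsum (F m) (fun j _ => sq_nonneg _) hsumm
  have htnn : 0 ≤ t := Finset.sum_nonneg fun j _ => sq_nonneg _
  have hunn : 0 ≤ u := Finset.sum_nonneg fun j _ => sq_nonneg _
  have hw2 : w ^ 2 ≤ t * u := by
    have := Finset.sum_mul_sq_le_sq_mul_sq (F m \ F n) (fun j => (a j).re)
      (fun j => (a j).im)
    simpa [hw, ht, hu] using this
  have hkey := key_ineq (α := h * t) (β := h * u) (γ := (h/2) * w)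
    (by positivity) (by positivity) (by nlinarith [sq_nonneg h, hh.le])
  have hDeq : (∑ j ∈ F m \ F n, ‖a j‖ ^ 2) = t + u := by
    rw [ht, hu, ← Finset.sum_add_distrib]
    refine Finset.sum_congr rfl fun j _ => ?_
    rw [Complex.sq_norm, Complex.normSq_apply]
    ring
  have hreal : ∫ x, ‖f x‖ ^ 2 ∂μ ≤
      3 * h * Real.exp (h * T) * ∑ j ∈ F m \ F n, ‖a j‖ ^ 2 := by
    rw [hI, hsre, hsim, hDeq]
    have lhs_eq : Real.exp (h * rn)
        - 2 * (Real.exp (h * rn + (h/4) * (t - u)) * Real.cos ((h/4) * (2 * w)))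
        + Real.exp (h * rm)
        = Real.exp (h * rn) *
          (1 + Real.exp (h * t) - 2 * Real.exp ((h * t - h * u)/4) * Real.cos ((h/2) * w)) := by
      rw [hrm', show (h/4) * (2 * w) = (h/2) * w by ring,
        show h * rn + (h/4) * (t - u) = h * rn + (h * t - h * u)/4 by ring,
        show h * (rn + t) = h * rn + h * t by ring]
      simp only [Real.exp_add]
      ring
    rw [lhs_eq]
    calc Real.exp (h * rn) *
          (1 + Real.exp (h * t) - 2 * Real.exp ((h * t - h * u)/4) * Real.cos ((h/2) * w))
        ≤ Real.exp (h * rn) * (3 * (h * t + h * u) * Real.exp (h * t)) :=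
          mul_le_mul_of_nonneg_left hkey (Real.exp_pos _).le
      _ = (3 * h * (t + u)) * Real.exp (h * rn + h * t) := by
          rw [Real.exp_add]; ring
      _ ≤ (3 * h * (t + u)) * Real.exp (h * T) := by
          refine mul_le_mul_of_nonneg_left ?_ (by positivity)
          refine Real.exp_le_exp.mpr ?_
          have h1 : rn + t ≤ T := hrm' ▸ hrmT
          nlinarith [hh.le]
      _ = 3 * h * Real.exp (h * T) * (t + u) := by ring
  -- convert the eLpNorm statement
  have hfm : AEStronglyMeasurable f μ := by
    refine Continuous.aestronglyMeasurable ?_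
    rw [hf]
    unfold ellSum
    fun_prop
  rw [eLpNorm_eq_lintegral_rpow_enorm_toReal (by norm_num) (by norm_num)]
  have htoReal : ((2 : ℝ≥0∞)).toReal = (2 : ℝ) := by norm_num
  rw [htoReal]
  rw [← ENNReal.rpow_natCast _ 2, ← ENNReal.rpow_mul]
  norm_num
  have hlin : ∫⁻ x, ‖f x‖ₑ ^ (2:ℕ) ∂μ = ENNReal.ofReal (∫ x, ‖f x‖^2 ∂μ) := by
    rw [ofReal_integral_eq_lintegral_ofReal hInt (ae_of_all _ fun x => sq_nonneg _)]
    refine lintegral_congr fun x => ?_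
    rw [ENNReal.ofReal_pow (norm_nonneg _), ofReal_norm]
  rw [hlin]
  exact ENNReal.ofReal_le_ofReal hreal
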